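/- For 0 < α < 1, L > 0, and a natural number n, the fixed-memory-length fractional derivative of the power function f(t) = t^n satisfies D^α_L(t^n) = Σ_{k=0}^{n} n!·L^(k-α)·(t-L)^(n-k) / ((n-k)!·Γ(k-α+1)). -/

import Mathlib

open Real Finset intervalIntegral

lemma cont_tsub_rpow (t c : ℝ) (hc : 0 ≤ c) : Continuous fun τ : ℝ => (t - τ) ^ c :=
  (Real.continuous_rpow_const hc).comp (continuous_const.sub continuous_id)

lemma parts_step (t L c : ℝ) (hc : 0 < c) (m : ℕ) :
    (∫ τ in (t - L)..t, (t - τ) ^ c * τ ^ (m + 1))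
      = L ^ (c + 1) * (t - L) ^ (m + 1) / (c + 1)
        + ((m + 1 : ℝ) / (c + 1)) * ∫ τ in (t - L)..t, (t - τ) ^ (c + 1) * τ ^ m := by
  have hc1 : (0:ℝ) < c + 1 := by linarith
  have hv : ∀ x ∈ Set.uIcc (t - L) t,
      HasDerivAt (fun τ : ℝ => -(t - τ) ^ (c + 1) / (c + 1)) ((t - x) ^ c) x := by
    intro x _
    have h1 : HasDerivAt (fun τ : ℝ => t - τ) (-1) x := by
      simpa using (hasDerivAt_id' x).const_sub t
    have h2 := h1.rpow_const (p := c + 1) (Or.inr (by linarith))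
    have h3 := h2.neg.div_const (c + 1)
    have he : c + 1 - 1 = c := by ring
    rw [he] at h2 h3
    refine h3.congr_deriv ?_
    rw [div_eq_iff hc1.ne']
    ring
  have hu : ∀ x ∈ Set.uIcc (t - L) t,
      HasDerivAt (fun τ : ℝ => τ ^ (m + 1)) (((m : ℝ) + 1) * x ^ m) x := by
    intro x _
    simpa using hasDerivAt_pow (m + 1) x
  have hu' : IntervalIntegrable (fun x : ℝ => ((m : ℝ) + 1) * x ^ m) MeasureTheory.volume (t - L) t :=
    (continuous_const.mul (continuous_pow m)).intervalIntegrable _ _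
  have hv' : IntervalIntegrable (fun x : ℝ => (t - x) ^ c) MeasureTheory.volume (t - L) t :=
    (cont_tsub_rpow t c hc.le).intervalIntegrable _ _
  have hparts := intervalIntegral.integral_mul_deriv_eq_deriv_mul hu hv hu' hv'
  have hl : (∫ τ in (t - L)..t, (t - τ) ^ c * τ ^ (m + 1))
      = ∫ x in (t - L)..t, x ^ (m + 1) * (t - x) ^ c := by
    congr 1; ext τ; ring
  rw [hl, hparts]
  have h0 : (t - t : ℝ) = 0 := by ring
  have hz : ((0:ℝ)) ^ (c + 1) = 0 := Real.zero_rpow (by linarith)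
  have hLL : t - (t - L) = L := by ring
  rw [h0, hz, hLL]
  have hint : (∫ x in (t - L)..t, ((m : ℝ) + 1) * x ^ m * (-(t - x) ^ (c + 1) / (c + 1)))
      = (-((m : ℝ) + 1) / (c + 1)) * ∫ x in (t - L)..t, (t - x) ^ (c + 1) * x ^ m := by
    rw [← intervalIntegral.integral_const_mul]
    congr 1; ext x; field_simp
  rw [hint]
  field_simp
  ring

lemma key_integral (t L : ℝ) (hL : 0 < L) : ∀ (m : ℕ) (c : ℝ), 0 < c →
    (∫ τ in (t - L)..t, (t - τ) ^ c * τ ^ m)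
      = Real.Gamma (c + 1) * ∑ j ∈ Finset.range (m + 1),
          ((m.factorial : ℝ) / ((m - j).factorial : ℝ)) * L ^ (c + 1 + (j : ℝ))
            * (t - L) ^ (m - j) / Real.Gamma (c + 2 + (j : ℝ)) := by
  intro m
  induction m with
  | zero =>
    intro c hc
    have hc1 : (0:ℝ) < c + 1 := by linarith
    have hΓ : Real.Gamma (c + 2) = (c + 1) * Real.Gamma (c + 1) := by
      have := Real.Gamma_add_one (show c + 1 ≠ 0 by positivity)
      rw [show c + 2 = c + 1 + 1 by ring, this]
    have hint : (∫ τ in (t - L)..t, (t - τ) ^ c * τ ^ 0) = L ^ (c + 1) / (c + 1) := by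
      simp only [pow_zero, mul_one]
      rw [intervalIntegral.integral_comp_sub_left (fun x : ℝ => x ^ c) t,
        show t - t = (0:ℝ) by ring, show t - (t - L) = L by ring,
        integral_rpow (Or.inl (by linarith)), Real.zero_rpow (by positivity)]
      ring
    rw [hint]
    simp only [zero_add, Finset.sum_range_one, Nat.cast_zero, Nat.factorial_zero, Nat.sub_zero,
      pow_zero, Nat.cast_one, add_zero]
    rw [hΓ]
    have h1 : Real.Gamma (c + 1) ≠ 0 := (Real.Gamma_pos_of_pos hc1).ne'
    field_simp
  | succ m IH =>
    intro c hc
    have hc1 : (0:ℝ) < c + 1 := by linarith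
    have hne : c + 1 ≠ 0 := by positivity
    have hΓ : Real.Gamma (c + 2) = (c + 1) * Real.Gamma (c + 1) := by
      have := Real.Gamma_add_one hne
      rw [show c + 2 = c + 1 + 1 by ring, this]
    have h1 : Real.Gamma (c + 1) ≠ 0 := (Real.Gamma_pos_of_pos hc1).ne'
    rw [parts_step t L c hc m, IH (c + 1) hc1]
    conv_rhs => rw [Finset.sum_range_succ', mul_add, add_comm]
    congr 1
    · simp only [Nat.cast_zero, Nat.sub_zero, add_zero]
      have h4 : ((m + 1).factorial : ℝ) ≠ 0 := by positivity
      rw [hΓ]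
      field_simp
    · simp only [Finset.mul_sum]
      apply Finset.sum_congr rfl
      intro i hi
      have hsub : m + 1 - (i + 1) = m - i := by omega
      rw [hsub]
      push_cast [Nat.factorial_succ]
      rw [show c + 1 + ((i:ℝ) + 1) = c + 1 + 1 + (i:ℝ) by ring,
        show c + 2 + ((i:ℝ) + 1) = c + 1 + 2 + (i:ℝ) by ring,
        Real.Gamma_add_one hne]
      have h2 : Real.Gamma (c + 1 + 2 + (i:ℝ)) ≠ 0 := by
        have : (0:ℝ) < c + 1 + 2 + (i:ℝ) := by positivity
        exact (Real.Gamma_pos_of_pos this).ne'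
      have h3 : ((m - i).factorial : ℝ) ≠ 0 := by positivity
      field_simp

noncomputable def Dfml (α L : ℝ) (f : ℝ → ℝ) (t : ℝ) : ℝ :=
  f (t - L) * L ^ (-α) / Real.Gamma (1 - α)
  + deriv f (t - L) * L ^ (1 - α) / Real.Gamma (2 - α)
  + (1 / Real.Gamma (2 - α)) * ∫ τ in (t - L)..t, (t - τ) ^ (1 - α) * deriv (deriv f) τ

lemma sum_split (F : ℕ → ℝ) (m : ℕ) :
    ∑ k ∈ Finset.range (m + 2 + 1), F k
      = F 0 + F 1 + ∑ j ∈ Finset.range (m + 1), F (j + 2) := by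
  rw [Finset.sum_range_succ' F (m + 2), show m + 2 = m + 1 + 1 from rfl,
    Finset.sum_range_succ' (fun i => F (i + 1)) (m + 1)]
  have h : ∀ i, F (i + 1 + 1) = F (i + 2) := fun i => rfl
  simp only [h, zero_add]
  ring

theorem stmt_3 (α L : ℝ) (hα0 : 0 < α) (hα1 : α < 1) (hL : 0 < L) (n : ℕ) (t : ℝ) :
    Dfml α L (fun s => s ^ n) t
    = ∑ k ∈ Finset.range (n + 1),
        (n.factorial : ℝ) * L ^ ((k : ℝ) - α) * (t - L) ^ (n - k)
          / (((n - k).factorial : ℝ) * Real.Gamma ((k : ℝ) - α + 1)) := by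
  have h1α : (0:ℝ) < 1 - α := by linarith
  have h2α : (0:ℝ) < 2 - α := by linarith
  have hΓ1 : Real.Gamma (1 - α) ≠ 0 := (Real.Gamma_pos_of_pos h1α).ne'
  have hΓ2 : Real.Gamma (2 - α) ≠ 0 := (Real.Gamma_pos_of_pos h2α).ne'
  rcases Nat.lt_or_ge n 2 with h2 | h2
  · interval_cases n
    · simp only [Dfml, pow_zero]
      have hd : deriv (fun _ : ℝ => (1:ℝ)) = fun _ : ℝ => (0:ℝ) := by
        funext x; exact deriv_const x 1
      rw [hd]
      have hdd : deriv (fun _ : ℝ => (0:ℝ)) = fun _ : ℝ => (0:ℝ) := by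
        funext x; exact deriv_const x 0
      rw [hdd]
      rw [Finset.sum_range_one]
      simp only [mul_zero, intervalIntegral.integral_zero, zero_mul, zero_div, add_zero,
        Nat.cast_zero, Nat.factorial_zero, Nat.sub_zero, pow_zero, Nat.cast_one]
      rw [show (0:ℝ) - α = -α by ring, show -α + 1 = 1 - α by ring]
      field_simp
    · simp only [Dfml]
      have hd : deriv (fun s : ℝ => s ^ 1) = fun _ : ℝ => (1:ℝ) := by
        funext x; rw [deriv_pow_field]; norm_num
      rw [hd]
      have hdd : deriv (fun _ : ℝ => (1:ℝ)) = fun _ : ℝ => (0:ℝ) := by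
        funext x; exact deriv_const x 1
      rw [hdd]
      rw [Finset.sum_range_succ, Finset.sum_range_one]
      simp only [mul_zero, intervalIntegral.integral_zero, zero_div, add_zero,
        Nat.cast_zero, Nat.cast_one, Nat.factorial_one, Nat.sub_zero, pow_zero, pow_one,
        Nat.sub_self, Nat.factorial_zero, mul_zero]
      rw [show (0:ℝ) - α = -α by ring, show -α + 1 = 1 - α by ring,
        show (1:ℝ) - α + 1 = 2 - α by ring]
      field_simp
      try exact Or.inl trivial
  · obtain ⟨m, rfl⟩ : ∃ m, n = m + 2 := ⟨n - 2, by omega⟩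
    simp only [Dfml]
    have hd : deriv (fun s : ℝ => s ^ (m + 2)) = fun x : ℝ => ((m:ℝ) + 2) * x ^ (m + 1) := by
      funext x; rw [deriv_pow_field]; push_cast; norm_num
    have hdd : deriv (deriv (fun s : ℝ => s ^ (m + 2)))
        = fun τ : ℝ => ((m:ℝ) + 2) * ((m:ℝ) + 1) * τ ^ m := by
      rw [hd, deriv_const_mul_field']
      funext τ
      rw [deriv_pow_field]
      push_cast
      norm_num
      ring
    rw [hdd, hd]
    beta_reduce
    have hint : (∫ τ in (t - L)..t, (t - τ) ^ (1 - α) * (((m:ℝ) + 2) * ((m:ℝ) + 1) * τ ^ m))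
        = ((m:ℝ) + 2) * ((m:ℝ) + 1) * ∫ τ in (t - L)..t, (t - τ) ^ (1 - α) * τ ^ m := by
      rw [← intervalIntegral.integral_const_mul]
      congr 1; ext τ; ring
    rw [hint, key_integral t L hL m (1 - α) h1α, sum_split]
    have hfact : (((m + 2).factorial : ℕ) : ℝ) = ((m:ℝ) + 2) * (((m:ℝ) + 1) * (m.factorial : ℝ)) := by
      rw [show m + 2 = m + 1 + 1 from rfl, Nat.factorial_succ, Nat.factorial_succ]
      push_cast; ring
    congr 1
    · congr 1
      · -- k = 0 term
        simp only [Nat.cast_zero, Nat.sub_zero]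
        rw [show (0:ℝ) - α = -α by ring, show -α + 1 = 1 - α by ring]
        have hf : (((m + 2).factorial : ℕ) : ℝ) ≠ 0 := by positivity
        field_simp
      · -- k = 1 term
        simp only [Nat.cast_one]
        rw [show m + 2 - 1 = m + 1 from by omega, show (1:ℝ) - α + 1 = 2 - α by ring, hfact]
        have hf : ((m + 1).factorial : ℝ) ≠ 0 := by positivity
        have hfs : ((m + 1).factorial : ℝ) = ((m:ℝ) + 1) * (m.factorial : ℝ) := by
          rw [Nat.factorial_succ]; push_cast; ring
        rw [hfs]
        have hm : (m.factorial : ℝ) ≠ 0 := by positivity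
        field_simp
    · -- integral part vs sum of k ≥ 2 terms
      rw [show (1:ℝ) - α + 1 = 2 - α by ring]
      simp only [Finset.mul_sum]
      apply Finset.sum_congr rfl
      intro j hj
      rw [show m + 2 - (j + 2) = m - j from by omega, hfact]
      push_cast
      rw [show (1:ℝ) - α + 2 + (j:ℝ) = (j:ℝ) + 2 - α + 1 by ring,
        show (2:ℝ) - α + (j:ℝ) = (j:ℝ) + 2 - α by ring]
      have hΓ3 : Real.Gamma ((j:ℝ) + 2 - α + 1) ≠ 0 := by
        have hj0 : (0:ℝ) ≤ (j:ℝ) := Nat.cast_nonneg j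
        have : (0:ℝ) < (j:ℝ) + 2 - α + 1 := by linarith
        exact (Real.Gamma_pos_of_pos this).ne'
      have hm : (m.factorial : ℝ) ≠ 0 := by positivity
      have hmj : ((m - j).factorial : ℝ) ≠ 0 := by positivity
      field_simp
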